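/- Under the assumptions of the DWR framework for finite volume methods — u solves a(u;v) + a_δ(u;v) = ⟨f,v⟩ for all v ∈ V, z solves the dual problem a'(u;w,z) + a_δ'(u;w,z) = j'(u;w) for all w ∈ V, u_T ∈ V_T solves the discrete problem a_T(u_T;v) = ⟨f_T,v⟩ for all v ∈ V_T, z_T ∈ V_T solves a'(u_T;w,z_T) = j'(u_T;w) for all w ∈ V_T, and L(x) := j(u) + ⟨f,z⟩ - a(u;z) - a_δ(u;z) is three times differentiable — the error in the functional satisfies: j(u) - j(u_T) = -a_δ(u_T;z_T) + [⟨f,z_T⟩ - ⟨f_T,z_T⟩ - a(u_T;z_T) + a_T(u_T;z_T)] + (1/2)[ϱ(u_T; z - i_T z) + ϱ*(u_T; z_T, u - i_T u)] - (1/2)[a_δ(u_T; e_z) + a_δ'(u_T; e_u, z_T)] - (1/2)ϱ(u_T; z_T - i_T z) - (1/2)R, where ϱ(u_T;v) := ⟨f,v⟩ - a(u_T;v), ϱ*(u_T;z_T,w) := j'(u_T;w) - a'(u_T;w,z_T), e = (e_u,e_z) = (u - u_T, z - z_T), i_T : V → V_T is any interpolation operator, and R = ∫₀¹ σ(1-σ)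 L'''(x_T + σe)(e,e,e) dσ with x_T = (u_T, z_T), x = (u,z). -/

import Mathlib

open MeasureTheory

lemma lineDeriv_aux {W : Type*} [NormedAddCommGroup W] [NormedSpace ℝ W]
    {L : W → ℝ} {n N : ℕ} (hn : n ≤ N) (hL : ContDiff ℝ N L) (c e : W) :
    ∀ σ : ℝ, iteratedDeriv n (fun t => L (c + t • e)) σ
      = iteratedFDeriv ℝ n L (c + σ • e) (fun _ => e) := by
  induction n with
  | zero => intro σ; simp [iteratedDeriv_zero, iteratedFDeriv_zero_apply]
  | succ n IH =>
    intro σ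
    have hn' : n ≤ N := le_trans (Nat.le_succ n) hn
    have hdiff : Differentiable ℝ (iteratedFDeriv ℝ n L) :=
      hL.differentiable_iteratedFDeriv (by exact_mod_cast Nat.lt_of_succ_le hn)
    have hline : HasDerivAt (fun t : ℝ => c + t • e) e σ := by
      simpa using ((hasDerivAt_id σ).smul_const e).const_add c
    have h3 : HasDerivAt (fun t : ℝ => iteratedFDeriv ℝ n L (c + t • e))
        (fderiv ℝ (iteratedFDeriv ℝ n L) (c + σ • e) e) σ :=
      (hdiff (c + σ • e)).hasFDerivAt.comp_hasDerivAt σ hline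
    have h4 := ((ContinuousMultilinearMap.apply ℝ (fun _ : Fin n => W) ℝ
        (fun _ => e)).hasFDerivAt.comp_hasDerivAt σ h3)
    rw [iteratedDeriv_succ]
    have hcongr : deriv (iteratedDeriv n (fun t => L (c + t • e))) σ
        = deriv (fun t => iteratedFDeriv ℝ n L (c + t • e) (fun _ => e)) σ := by
      congr 1
      funext t
      exact IH hn' t
    have h4' : HasDerivAt (fun t => iteratedFDeriv ℝ n L (c + t • e) (fun _ => e))
        (fderiv ℝ (iteratedFDeriv ℝ n L) (c + σ • e) e (fun _ => e)) σ := h4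
    rw [hcongr, h4'.deriv, iteratedFDeriv_succ_apply_left]
    rfl

theorem stmt_15 {V : Type*} [NormedAddCommGroup V] [NormedSpace ℝ V] [CompleteSpace V]
    (VT : Submodule ℝ V)
    (a aδ aT : V → V → ℝ) (f fT : V → ℝ) (j : V → ℝ)
    -- linearity in the second argument
    (halin : ∀ u, IsLinearMap ℝ (a u)) (hδlin : ∀ u, IsLinearMap ℝ (aδ u))
    (hflin : IsLinearMap ℝ f) (hfTlin : IsLinearMap ℝ fT)
    -- the Lagrangian and its differentiability
    (L : V × V → ℝ)
    (hLdef : ∀ p : V × V, L p = j p.1 + f p.2 - a p.1 p.2 - aδ p.1 p.2)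
    (hL : ContDiff ℝ 3 L)
    -- differentiability in the first argument
    (ha : ∀ v, Differentiable ℝ (fun t => a t v))
    (haδ : ∀ v, Differentiable ℝ (fun t => aδ t v))
    (hj : Differentiable ℝ j)
    -- primal and dual solutions of the accurate problem
    (u z : V)
    (hu : ∀ v : V, a u v + aδ u v = f v)
    (hz : ∀ w : V, fderiv ℝ (fun t => a t z) u w + fderiv ℝ (fun t => aδ t z) u w
            = fderiv ℝ j u w)
    -- discrete primal and dual solutions
    (uT zT : V) (huT : uT ∈ VT) (hzT : zT ∈ VT)
    (hdiscr : ∀ v ∈ VT, aT uT v = fT v)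
    (hdual : ∀ w ∈ VT, fderiv ℝ (fun t => a t zT) uT w = fderiv ℝ j uT w)
    -- interpolation operator
    (iT : V → V) (hiT : ∀ v : V, iT v ∈ VT) :
    j u - j uT
      = -aδ uT zT
        + (f zT - fT zT - a uT zT + aT uT zT)
        + (1/2) * ((f (z - iT z) - a uT (z - iT z))
            + (fderiv ℝ j uT (u - iT u) - fderiv ℝ (fun t => a t zT) uT (u - iT u)))
        - (1/2) * (aδ uT (z - zT) + fderiv ℝ (fun t => aδ t zT) uT (u - uT))
        - (1/2) * (f (zT - iT z) - a uT (zT - iT z))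
        - (1/2) * ∫ σ in (0:ℝ)..1,
            σ * (1 - σ) * iteratedFDeriv ℝ 3 L ((uT, zT) + σ • ((u - uT, z - zT) : V × V))
              ![(u - uT, z - zT), (u - uT, z - zT), (u - uT, z - zT)] := by
  set eu : V := u - uT with heu
  set ez : V := z - zT with hez
  set E : V × V := (eu, ez) with hE
  set c : V × V := (uT, zT) with hc
  set φ : ℝ → ℝ := fun t => L (c + t • E) with hφ
  -- expansion of φ
  have hexp : ∀ t : ℝ, φ t
      = j (uT + t • eu) + (f zT + t * f ez)
        - (a (uT + t • eu) zT + t * a (uT + t • eu) ez)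
        - (aδ (uT + t • eu) zT + t * aδ (uT + t • eu) ez) := by
    intro t
    have hpt : c + t • E = (uT + t • eu, zT + t • ez) := rfl
    rw [hφ]
    simp only [hpt, hLdef]
    rw [hflin.map_add, hflin.map_smul, (halin _).map_add, (halin _).map_smul,
      (hδlin _).map_add, (hδlin _).map_smul]
    simp [smul_eq_mul]
  -- derivative of φ at any point
  have hD : ∀ t : ℝ, HasDerivAt φ
      (fderiv ℝ j (uT + t • eu) eu + f ez
        - (fderiv ℝ (fun s => a s zT) (uT + t • eu) eu
            + (a (uT + t • eu) ez + t * fderiv ℝ (fun s => a s ez) (uT + t • eu) eu))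
        - (fderiv ℝ (fun s => aδ s zT) (uT + t • eu) eu
            + (aδ (uT + t • eu) ez + t * fderiv ℝ (fun s => aδ s ez) (uT + t • eu) eu))) t := by
    intro t
    have hline : HasDerivAt (fun s : ℝ => uT + s • eu) eu t := by
      simpa using ((hasDerivAt_id t).smul_const eu).const_add uT
    have hjd : HasDerivAt (fun s : ℝ => j (uT + s • eu))
        (fderiv ℝ j (uT + t • eu) eu) t :=
      (hj _).hasFDerivAt.comp_hasDerivAt t hline
    have hfz : HasDerivAt (fun s : ℝ => f zT + s * f ez) (f ez) t := by
      simpa using ((hasDerivAt_id t).mul_const (f ez)).const_add (f zT)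
    have hazT : HasDerivAt (fun s : ℝ => a (uT + s • eu) zT)
        (fderiv ℝ (fun s => a s zT) (uT + t • eu) eu) t :=
      ((ha zT) _).hasFDerivAt.comp_hasDerivAt t hline
    have haez : HasDerivAt (fun s : ℝ => a (uT + s • eu) ez)
        (fderiv ℝ (fun s => a s ez) (uT + t • eu) eu) t :=
      ((ha ez) _).hasFDerivAt.comp_hasDerivAt t hline
    have hamul : HasDerivAt (fun s : ℝ => s * a (uT + s • eu) ez)
        (a (uT + t • eu) ez + t * fderiv ℝ (fun s => a s ez) (uT + t • eu) eu) t := by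
      have := (hasDerivAt_id t).fun_mul haez
      simpa using this
    have hδzT : HasDerivAt (fun s : ℝ => aδ (uT + s • eu) zT)
        (fderiv ℝ (fun s => aδ s zT) (uT + t • eu) eu) t :=
      ((haδ zT) _).hasFDerivAt.comp_hasDerivAt t hline
    have hδez : HasDerivAt (fun s : ℝ => aδ (uT + s • eu) ez)
        (fderiv ℝ (fun s => aδ s ez) (uT + t • eu) eu) t :=
      ((haδ ez) _).hasFDerivAt.comp_hasDerivAt t hline
    have hδmul : HasDerivAt (fun s : ℝ => s * aδ (uT + s • eu) ez)
        (aδ (uT + t • eu) ez + t * fderiv ℝ (fun s => aδ s ez) (uT + t • eu) eu) t := by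
      have := (hasDerivAt_id t).fun_mul hδez
      simpa using this
    have hcomb := ((hjd.add hfz).sub (hazT.add hamul)).sub (hδzT.add hδmul)
    have hfuneq : φ = fun s : ℝ => j (uT + s • eu) + (f zT + s * f ez)
        - (a (uT + s • eu) zT + s * a (uT + s • eu) ez)
        - (aδ (uT + s • eu) zT + s * aδ (uT + s • eu) ez) := funext hexp
    rw [hfuneq]
    exact hcomb
  -- smoothness of φ
  have hφ3 : ContDiff ℝ 3 φ := hL.comp (contDiff_const.add (contDiff_id.smul contDiff_const))
  set ψ1 : ℝ → ℝ := deriv φ with hψ1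
  set ψ2 : ℝ → ℝ := deriv ψ1 with hψ2
  set ψ3 : ℝ → ℝ := deriv ψ2 with hψ3
  have hψ1C : ContDiff ℝ 2 ψ1 :=
    (contDiff_succ_iff_deriv.mp
      (show ContDiff ℝ ((2:WithTop ℕ∞)+1) φ by exact_mod_cast hφ3)).2.2
  have hψ2C : ContDiff ℝ 1 ψ2 :=
    (contDiff_succ_iff_deriv.mp
      (show ContDiff ℝ ((1:WithTop ℕ∞)+1) ψ1 by exact_mod_cast hψ1C)).2.2
  have hφdiff : Differentiable ℝ φ := hφ3.differentiable (by norm_num)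
  have hψ1diff : Differentiable ℝ ψ1 := hψ1C.differentiable (by norm_num)
  have hψ2diff : Differentiable ℝ ψ2 := hψ2C.differentiable (by norm_num)
  have hψ1cont : Continuous ψ1 := hφ3.continuous_deriv (by norm_num)
  have hψ2cont : Continuous ψ2 := hψ1C.continuous_deriv (by norm_num)
  have hψ3cont : Continuous ψ3 := hψ2C.continuous_deriv (by norm_num)
  -- endpoint values of ψ1
  have hψ10 : ψ1 0 = fderiv ℝ j uT eu + f ez
      - (fderiv ℝ (fun s => a s zT) uT eu + a uT ez)
      - (fderiv ℝ (fun s => aδ s zT) uT eu + aδ uT ez) := by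
    have h := (hD 0).deriv
    rw [hψ1, h]
    simp
  have hu1 : uT + (1:ℝ) • eu = u := by rw [one_smul, heu]; abel
  have hψ11 : ψ1 1 = 0 := by
    have h := (hD 1).deriv
    rw [hψ1, h, hu1]
    have hsa : fderiv ℝ (fun s => a s zT) u eu + fderiv ℝ (fun s => a s ez) u eu
        = fderiv ℝ (fun s => a s z) u eu := by
      have hfun : (fun s => a s z) = fun s => a s zT + a s ez := by
        funext s
        rw [← (halin s).map_add]
        congr 1
        rw [hez]; abel
      rw [hfun, fderiv_fun_add ((ha zT).differentiableAt) ((ha ez).differentiableAt)]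
      simp
    have hsδ : fderiv ℝ (fun s => aδ s zT) u eu + fderiv ℝ (fun s => aδ s ez) u eu
        = fderiv ℝ (fun s => aδ s z) u eu := by
      have hfun : (fun s => aδ s z) = fun s => aδ s zT + aδ s ez := by
        funext s
        rw [← (hδlin s).map_add]
        congr 1
        rw [hez]; abel
      rw [hfun, fderiv_fun_add ((haδ zT).differentiableAt) ((haδ ez).differentiableAt)]
      simp
    have h1 := hz eu
    have h2 := hu ez
    linarith
  -- endpoint values of φ
  have hφ1 : φ 1 = j u := by
    have hpt : c + (1:ℝ) • E = (u, z) := by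
      rw [one_smul, hc, hE, Prod.mk_add_mk, Prod.mk.injEq]
      constructor
      · rw [heu]; abel
      · rw [hez]; abel
    have : φ 1 = L (u, z) := by rw [hφ]; simp only [hpt]
    rw [this, hLdef]
    have := hu z
    simp only []
    linarith
  have hφ0 : φ 0 = j uT + f zT - a uT zT - aδ uT zT := by
    have hpt : c + (0:ℝ) • E = (uT, zT) := by rw [zero_smul, add_zero, hc]
    have : φ 0 = L (uT, zT) := by rw [hφ]; simp only [hpt]
    rw [this, hLdef]
  -- integration by parts
  have hIBP1 : ∫ x in (0:ℝ)..1, (x * (1 - x)) * ψ3 x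
      = (1 * (1 - 1)) * ψ2 1 - (0 * (1 - 0)) * ψ2 0
        - ∫ x in (0:ℝ)..1, (1 - 2 * x) * ψ2 x := by
    apply intervalIntegral.integral_mul_deriv_eq_deriv_mul_of_hasDerivAt
    · exact (Continuous.continuousOn (by fun_prop))
    · exact hψ2cont.continuousOn
    · intro x _
      have h := (hasDerivAt_id' x).fun_mul ((hasDerivAt_const x (1:ℝ)).fun_sub (hasDerivAt_id' x))
      convert h using 1
      simp; ring
    · intro x _
      exact hψ3 ▸ (hψ2diff x).hasDerivAt
    · exact (Continuous.intervalIntegrable (by fun_prop) 0 1)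
    · exact hψ3cont.intervalIntegrable 0 1
  have hIBP2 : ∫ x in (0:ℝ)..1, (1 - 2 * x) * ψ2 x
      = (1 - 2 * 1) * ψ1 1 - (1 - 2 * 0) * ψ1 0
        - ∫ x in (0:ℝ)..1, (-2) * ψ1 x := by
    apply intervalIntegral.integral_mul_deriv_eq_deriv_mul_of_hasDerivAt
    · exact (Continuous.continuousOn (by fun_prop))
    · exact hψ1cont.continuousOn
    · intro x _
      have h := (hasDerivAt_const x (1:ℝ)).fun_sub ((hasDerivAt_id' x).const_mul 2)
      exact h.congr_deriv (by norm_num)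
    · intro x _
      exact hψ2 ▸ (hψ1diff x).hasDerivAt
    · exact (Continuous.intervalIntegrable (by fun_prop) 0 1)
    · exact hψ2cont.intervalIntegrable 0 1
  have hconst : ∫ x in (0:ℝ)..1, (-2) * ψ1 x = (-2) * ∫ x in (0:ℝ)..1, ψ1 x :=
    intervalIntegral.integral_const_mul _ _
  have hIfund : ∫ x in (0:ℝ)..1, ψ1 x = φ 1 - φ 0 := by
    rw [hψ1]
    exact intervalIntegral.integral_deriv_eq_sub (fun x _ => hφdiff x)
      (hψ1cont.intervalIntegrable 0 1)
  -- identification of the integrand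
  have hL3 : ContDiff ℝ ((3:ℕ) : ℕ) L := by exact_mod_cast hL
  have hm3 : ![E, E, E] = (fun _ : Fin 3 => E) := by
    funext i; fin_cases i <;> rfl
  have hψ3eq : ∀ σ : ℝ, iteratedFDeriv ℝ 3 L (c + σ • E) ![E, E, E] = ψ3 σ := by
    intro σ
    rw [hm3, ← lineDeriv_aux (le_refl 3) hL3 c E σ, ← hφ]
    rw [show (3:ℕ) = 2 + 1 from rfl, iteratedDeriv_succ,
      show (2:ℕ) = 1 + 1 from rfl, iteratedDeriv_succ, iteratedDeriv_one]
  have hIconv : (∫ σ in (0:ℝ)..1,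
        σ * (1 - σ) * iteratedFDeriv ℝ 3 L (c + σ • E) ![E, E, E])
      = ∫ x in (0:ℝ)..1, (x * (1 - x)) * ψ3 x := by
    apply intervalIntegral.integral_congr
    intro x _
    simp only [hψ3eq]
  rw [hIconv]
  -- discrete identities
  have hGal : fderiv ℝ (fun t => a t zT) uT (iT u - uT)
      = fderiv ℝ j uT (iT u - uT) := hdual _ (VT.sub_mem (hiT u) huT)
  have hsplitj : fderiv ℝ j uT eu
      = fderiv ℝ j uT (u - iT u) + fderiv ℝ j uT (iT u - uT) := by
    rw [← map_add]; congr 1; rw [heu]; abel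
  have hsplita : fderiv ℝ (fun t => a t zT) uT eu
      = fderiv ℝ (fun t => a t zT) uT (u - iT u)
        + fderiv ℝ (fun t => a t zT) uT (iT u - uT) := by
    rw [← map_add]; congr 1; rw [heu]; abel
  have hsplitf : f ez = f (z - iT z) - f (zT - iT z) := by
    rw [← hflin.map_sub]; congr 1; rw [hez]; abel
  have hsplita2 : a uT ez = a uT (z - iT z) - a uT (zT - iT z) := by
    rw [← (halin uT).map_sub]; congr 1; rw [hez]; abel
  have hfT2 : aT uT zT = fT zT := hdiscr zT hzT
  linarith [hIBP1, hIBP2, hconst, hIfund, hψ10, hψ11, hφ1, hφ0, hGal,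
    hsplitj, hsplita, hsplitf, hsplita2, hfT2]
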